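/- Fix p ≥ 1 and positive integers m ≤ n. Define m_1 = m and m_{i+1} = ⌊m_i / 2^p⌋, and let J_i(m,n) be the set of vectors u ∈ {0, ±(m/m_i)^{1/p}}^n with ∑|u_i|^p = m. Then for i ≠ j, any u ∈ J_i(m,n) and v ∈ J_j(m,n) satisfy d_p(u,v) ≥ m^{1/p}. -/
import Mathlib


noncomputable def lpDist (p : ℝ) {n : ℕ} (u v : Fin n → ℝ) : ℝ :=
  (∑ i, |u i - v i| ^ p) ^ (1/p)

/-- `mseq p m i` is `m_{i+1}` of the paper: `m_1 = m`, `m_{i+1} = ⌊m_i / 2^p⌋`. -/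
noncomputable def mseq (p : ℝ) (m : ℕ) : ℕ → ℕ
  | 0 => m
  | i + 1 => ⌊(mseq p m i : ℝ) / 2 ^ p⌋₊

/-- The layer `J_{i+1}(m, n)` of the paper (0-indexed in `i`). -/
noncomputable def Jset (p : ℝ) (n m i : ℕ) : Set (Fin n → ℝ) :=
  {u | (∀ k, u k = 0 ∨ |u k| = ((m : ℝ) / (mseq p m i : ℝ)) ^ (1/p)) ∧
    ∑ k, |u k| ^ p = (m : ℝ)}

open Real Finset

lemma mseq_anti (p : ℝ) (hp : 1 ≤ p) (m : ℕ) : Antitone (mseq p m) := by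
  apply antitone_nat_of_succ_le
  intro k
  show ⌊(mseq p m k : ℝ) / 2 ^ p⌋₊ ≤ _
  calc ⌊(mseq p m k : ℝ) / 2 ^ p⌋₊ ≤ ⌊(mseq p m k : ℝ)⌋₊ := by
        apply Nat.floor_le_floor
        apply div_le_self (by positivity)
        calc (1:ℝ) = 2 ^ (0:ℝ) := by simp
          _ ≤ 2 ^ p := Real.rpow_le_rpow_of_exponent_le one_le_two (by linarith)
    _ = mseq p m k := Nat.floor_natCast _

lemma key (p : ℝ) (hp : 1 ≤ p) (n m : ℕ) (hm : 0 < m)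
    (i j : ℕ) (hij : i < j) (hi : 0 < mseq p m i) (hj : 0 < mseq p m j)
    (u v : Fin n → ℝ) (hu : u ∈ Jset p n m i) (hv : v ∈ Jset p n m j) :
    (m : ℝ) ≤ ∑ k, |u k - v k| ^ p := by
  have hp0 : 0 < p := by linarith
  have h2p : (0:ℝ) < 2 ^ p := by positivity
  set a : ℝ := ((m : ℝ) / (mseq p m i : ℝ)) ^ (1/p) with ha_def
  set b : ℝ := ((m : ℝ) / (mseq p m j : ℝ)) ^ (1/p) with hb_def
  have ha : 0 ≤ a := by positivity
  -- m_j ≤ m_i / 2^p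
  have hmj : (mseq p m j : ℝ) ≤ (mseq p m i : ℝ) / 2 ^ p := by
    have h1 : mseq p m j ≤ mseq p m (i+1) := mseq_anti p hp m hij
    have h2 : (mseq p m (i+1) : ℝ) ≤ (mseq p m i : ℝ) / 2 ^ p := by
      show ((⌊(mseq p m i : ℝ) / 2 ^ p⌋₊ : ℕ) : ℝ) ≤ _
      exact Nat.floor_le (by positivity)
    exact le_trans (by exact_mod_cast h1) h2
  -- a ≤ b / 2
  have hab : a ≤ b / 2 := by
    have h1 : (m : ℝ) / (mseq p m i : ℝ) ≤ ((m : ℝ) / (mseq p m j : ℝ)) / 2 ^ p := by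
      rw [div_div]
      apply div_le_div_of_nonneg_left (by positivity) (by positivity)
      calc (mseq p m j : ℝ) * 2 ^ p ≤ ((mseq p m i : ℝ) / 2 ^ p) * 2 ^ p := by
            exact mul_le_mul_of_nonneg_right hmj h2p.le
        _ = (mseq p m i : ℝ) := div_mul_cancel₀ _ h2p.ne'
  
    calc a ≤ (((m : ℝ) / (mseq p m j : ℝ)) / 2 ^ p) ^ (1/p) :=
          Real.rpow_le_rpow (by positivity) h1 (by positivity)
      _ = b / 2 := by
          rw [Real.div_rpow (by positivity) h2p.le, ← Real.rpow_mul (by norm_num : (0:ℝ) ≤ 2),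
            mul_one_div_cancel hp0.ne', Real.rpow_one]
  have hua : ∀ k, |u k| ≤ a := by
    intro k
    rcases hu.1 k with h | h
    · simp [h, ha]
    · rw [h]
  -- split on S = support of v
  have hsplit := Finset.sum_filter_add_sum_filter_not Finset.univ
    (fun k => v k ≠ 0) (fun k => |u k - v k| ^ p)
  set S : Finset (Fin n) := Finset.univ.filter (fun k => v k ≠ 0) with hS
  -- bound on S
  have hA : ∑ k ∈ S, |v k| ^ p / 2 ^ p ≤ ∑ k ∈ S, |u k - v k| ^ p := by
    apply Finset.sum_le_sum
    intro k hk
    have hvk : |v k| = b := by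
      rcases hv.1 k with h | h
      · exact absurd h (Finset.mem_filter.mp hk).2
      · exact h
    have h1 : |v k| / 2 ≤ |u k - v k| := by
      have := hua k
      have h2 : |v k| - |u k| ≤ |u k - v k| := by
        rw [abs_sub_comm]; exact abs_sub_abs_le_abs_sub _ _
      rw [hvk] at *
      linarith
    calc |v k| ^ p / 2 ^ p = (|v k| / 2) ^ p := (Real.div_rpow (abs_nonneg _) (by norm_num) p).symm
      _ ≤ |u k - v k| ^ p := Real.rpow_le_rpow (by positivity) h1 hp0.le
  -- on complement |u-v|^p = |u|^p
  have hB : ∑ k ∈ Sᶜ, |u k - v k| ^ p = ∑ k ∈ Sᶜ, |u k| ^ p := by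
    apply Finset.sum_congr rfl
    intro k hk
    have : v k = 0 := by
      simpa [hS] using Finset.mem_compl.mp hk
    simp [this]
  have hBval : ∑ k ∈ Sᶜ, |u k| ^ p = (m : ℝ) - ∑ k ∈ S, |u k| ^ p := by
    have := Finset.sum_add_sum_compl S (fun k => |u k| ^ p)
    rw [hu.2] at this
    linarith
  have hC : ∑ k ∈ S, |u k| ^ p ≤ ∑ k ∈ S, |v k| ^ p / 2 ^ p := by
    apply Finset.sum_le_sum
    intro k hk
    have hvk : |v k| = b := by
      rcases hv.1 k with h | h
      · exact absurd h (Finset.mem_filter.mp hk).2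
      · exact h
    calc |u k| ^ p ≤ (|v k| / 2) ^ p := by
          apply Real.rpow_le_rpow (abs_nonneg _) _ hp0.le
          rw [hvk]; linarith [hua k]
      _ = |v k| ^ p / 2 ^ p := Real.div_rpow (abs_nonneg _) (by norm_num) p
  have hcompl : ∑ k ∈ Finset.univ.filter (fun k => ¬ v k ≠ 0), |u k - v k| ^ p
      = ∑ k ∈ Sᶜ, |u k - v k| ^ p := by
    apply Finset.sum_congr _ (fun _ _ => rfl)
    ext k; simp [hS]
  rw [hcompl] at hsplit
  rw [hB, hBval] at hsplit
  linarith [hA, hC, hsplit]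

theorem stmt3 (p : ℝ) (hp : 1 ≤ p) (n m : ℕ) (hm : 0 < m) (hmn : m ≤ n)
    (i j : ℕ) (hij : i ≠ j) (hi : 0 < mseq p m i) (hj : 0 < mseq p m j)
    (u v : Fin n → ℝ) (hu : u ∈ Jset p n m i) (hv : v ∈ Jset p n m j) :
    (m : ℝ) ^ (1/p) ≤ lpDist p u v := by
  have hp0 : 0 < p := by linarith
  have key' : (m : ℝ) ≤ ∑ k, |u k - v k| ^ p := by
    rcases hij.lt_or_gt with h | h
    · exact key p hp n m hm i j h hi hj u v hu hv
    · have := key p hp n m hm j i h hj hi v u hv hu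
      simpa [abs_sub_comm] using this
  exact Real.rpow_le_rpow (by positivity) key' (by positivity)
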